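/- Let X and Y be disjoint finite sets and let Q = Q(X∪Y) be a blue/red colored Boolean lattice with no blue copy of Λ. Let X0 ⊆ X and Y0 ⊆ Y. Then the vertex (X0, Y0) is embeddable if and only if either (i) (X0, Y0) is blue and there is a Y' ⊆ Y with Y' ⊋ Y0 such that (X0, Y') is embeddable, or (ii) (X0, Y0) is red and for all X' ⊆ X with X' ⊋ X0, the vertex (X', Y0) is embeddable. -/

import Mathlib

/-- With blue/red coloring `c` (blue = `true`, red = `false`) of the Boolean lattice on a
ground set partitioned into `X ∪ Y`, there is a red `X`-good copy of `Q(X)`: an embedding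
`φ` of `Q(X)` with all images red and `φ(A) ∩ X = A` for all `A ⊆ X`. -/
def RedXGoodCopy {V : Type*} [DecidableEq V] (c : Finset V → Bool) (X : Finset V) : Prop :=
  ∃ φ : Finset V → Finset V,
    (∀ A B : Finset V, A ⊆ X → B ⊆ X → (A ⊆ B ↔ φ A ⊆ φ B)) ∧
    (∀ A : Finset V, A ⊆ X → φ A ∩ X = A) ∧
    (∀ A : Finset V, A ⊆ X → c (φ A) = false)

/-- `S` is an ordered subset of `Y`: a sequence of distinct elements of `Y`
(a vertex of the factorial tree `O(Y)`, ordered by the prefix relation `<+:`). -/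
def OrdSubset {V : Type*} (Y : Finset V) (S : List V) : Prop :=
  S.Nodup ∧ ∀ v ∈ S, v ∈ Y

/-- `τ` is a `Y`-good embedding of the factorial tree `O(Y)` into the Boolean lattice:
for ordered subsets `S, T` of `Y`, `S` is a prefix of `T` iff `τ S ⊆ τ T`, and
`τ S ∩ Y` is the underlying set of `S`. Its image is a `Y`-shrub. -/
def IsShrubMap {V : Type*} [DecidableEq V] (Y : Finset V) (τ : List V → Finset V) : Prop :=
  (∀ S T : List V, OrdSubset Y S → OrdSubset Y T → (S <+: T ↔ τ S ⊆ τ T)) ∧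
  (∀ S : List V, OrdSubset Y S → τ S ∩ Y = S.toFinset)

/-- `τ` determines a weak `Y`-shrub: `τ S ∩ Y` is the underlying set of `S` for every
ordered subset `S` of `Y`, and `τ S ⊊ τ T` whenever `S` is a strict prefix of `T`. -/
def IsWeakShrubMap {V : Type*} [DecidableEq V] (Y : Finset V) (τ : List V → Finset V) : Prop :=
  (∀ S T : List V, OrdSubset Y S → OrdSubset Y T → S <+: T → S ≠ T → τ S ⊂ τ T) ∧
  (∀ S : List V, OrdSubset Y S → τ S ∩ Y = S.toFinset)

/-- There is a monochromatic blue `Y`-shrub (blue = `true`). -/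
def BlueYShrub {V : Type*} [DecidableEq V] (c : Finset V → Bool) (Y : Finset V) : Prop :=
  ∃ τ : List V → Finset V, IsShrubMap Y τ ∧ ∀ S : List V, OrdSubset Y S → c (τ S) = true

/-- The coloring `c` admits no blue copy of the poset `Λ`: there are no blue vertices
`A, B, C` with `A ⊂ C`, `B ⊂ C` and `A`, `B` incomparable. -/
def NoBlueLambda {V : Type*} (c : Finset V → Bool) : Prop :=
  ¬ ∃ A B C : Finset V, c A = true ∧ c B = true ∧ c C = true ∧
      A ⊂ C ∧ B ⊂ C ∧ ¬ A ⊆ B ∧ ¬ B ⊆ A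

/-- For `X0 ⊆ X` and `Y0 ⊆ Y`, the vertex `(X0, Y0) = X0 ∪ Y0` is embeddable: there is a
map `φ` defined on `{X' : X0 ⊆ X' ⊆ X}` into the lattice with `X1 ⊆ X2` iff `φ X1 ⊆ φ X2`,
all images red (`false`), `φ X' ∩ X = X'` for all such `X'`, and `φ X0 ⊇ X0 ∪ Y0`. -/
def Embeddable {V : Type*} [DecidableEq V] (c : Finset V → Bool) (X : Finset V)
    (X0 Y0 : Finset V) : Prop :=
  ∃ φ : Finset V → Finset V,
    (∀ A B : Finset V, X0 ⊆ A → A ⊆ X → X0 ⊆ B → B ⊆ X → (A ⊆ B ↔ φ A ⊆ φ B)) ∧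
    (∀ A : Finset V, X0 ⊆ A → A ⊆ X → c (φ A) = false) ∧
    (∀ A : Finset V, X0 ⊆ A → A ⊆ X → φ A ∩ X = A) ∧
    X0 ∪ Y0 ⊆ φ X0

/-- Let `X`, `Y` be disjoint sets and let `Q(X ∪ Y)` be blue/red colored with
no blue copy of `Λ`. For `X0 ⊆ X`, `Y0 ⊆ Y`, the vertex `(X0, Y0)` is embeddable iff either
(i) `(X0, Y0)` is blue and there is `Y' ⊆ Y` with `Y' ⊋ Y0` such that `(X0, Y')` is
embeddable, or (ii) `(X0, Y0)` is red and for all `X' ⊆ X` with `X' ⊋ X0` the vertex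
`(X', Y0)` is embeddable. -/
theorem statement16 {V : Type*} [DecidableEq V] [Fintype V]
    (X Y : Finset V) (hd : Disjoint X Y) (hc : X ∪ Y = Finset.univ)
    (c : Finset V → Bool) (hΛ : NoBlueLambda c)
    (X0 Y0 : Finset V) (hX0 : X0 ⊆ X) (hY0 : Y0 ⊆ Y) :
    Embeddable c X X0 Y0 ↔
      ((c (X0 ∪ Y0) = true ∧
          ∃ Y' : Finset V, Y' ⊆ Y ∧ Y0 ⊂ Y' ∧ Embeddable c X X0 Y') ∨
       (c (X0 ∪ Y0) = false ∧
          ∀ X' : Finset V, X' ⊆ X → X0 ⊂ X' → Embeddable c X X' Y0)) := by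
  classical
  have hmemXY : ∀ v : V, v ∈ X ∨ v ∈ Y := by
    intro v
    have hv : v ∈ X ∪ Y := by rw [hc]; exact Finset.mem_univ v
    exact Finset.mem_union.mp hv
  constructor
  · rintro ⟨φ, hiff, hred, hint, hbot⟩
    have hX0φ : X0 ⊆ φ X0 := by
      have h : φ X0 ∩ X ⊆ φ X0 := Finset.inter_subset_left
      rwa [hint X0 Finset.Subset.rfl hX0] at h
    have hY0φ : Y0 ⊆ φ X0 := Finset.subset_union_right.trans hbot
    cases hcb : c (X0 ∪ Y0) with
    | false =>
      right
      refine ⟨rfl, fun X' hX'X hss => ?_⟩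
      refine ⟨φ, fun A B hA hAX hB hBX =>
          hiff A B (hss.subset.trans hA) hAX (hss.subset.trans hB) hBX,
        fun A hA hAX => hred A (hss.subset.trans hA) hAX,
        fun A hA hAX => hint A (hss.subset.trans hA) hAX, ?_⟩
      apply Finset.union_subset
      · have h : φ X' ∩ X ⊆ φ X' := Finset.inter_subset_left
        rwa [hint X' hss.subset hX'X] at h
      · have hmono : φ X0 ⊆ φ X' :=
          (hiff X0 X' Finset.Subset.rfl hX0 hss.subset hX'X).mp hss.subset
        exact hY0φ.trans hmono
    | true =>
      left
      refine ⟨rfl, φ X0 ∩ Y, Finset.inter_subset_right, ?_, ?_⟩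
      · refine Finset.ssubset_iff_subset_ne.mpr ⟨Finset.subset_inter hY0φ hY0, fun he => ?_⟩
        have hφeq : φ X0 = X0 ∪ Y0 := by
          apply Finset.Subset.antisymm
          · intro v hv
            rcases hmemXY v with hvX | hvY
            · exact Finset.mem_union_left _ (by
                rw [← hint X0 Finset.Subset.rfl hX0]
                exact Finset.mem_inter.mpr ⟨hv, hvX⟩)
            · refine Finset.mem_union_right _ ?_
              rw [he]
              exact Finset.mem_inter.mpr ⟨hv, hvY⟩
          · exact Finset.union_subset hX0φ hY0φ
        have hr := hred X0 Finset.Subset.rfl hX0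
        rw [hφeq, hcb] at hr
        exact Bool.noConfusion hr
      · exact ⟨φ, hiff, hred, hint, Finset.union_subset hX0φ Finset.inter_subset_left⟩
  · rintro (⟨hcb, Y', hY'Y, hY0Y', φ, h1, h2, h3, h4⟩ | ⟨hcb, hall⟩)
    · exact ⟨φ, h1, h2, h3, (Finset.union_subset_union_right hY0Y'.subset).trans h4⟩
    · -- the hard (red) direction
      set 𝔄 : Finset (Finset V) :=
        Finset.univ.filter (fun B => X0 ⊂ B ∧ B ⊆ X ∧ c (B ∪ Y0) = true) with h𝔄def
      have mem𝔄 : ∀ B, B ∈ 𝔄 ↔ (X0 ⊂ B ∧ B ⊆ X ∧ c (B ∪ Y0) = true) := by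
        intro B; simp [h𝔄def]
      set ℬ : Finset (Finset V) := 𝔄.filter (fun B => ∀ B' ∈ 𝔄, B' ⊆ B → B' = B) with hℬdef
      have memℬ : ∀ B, B ∈ ℬ ↔ (B ∈ 𝔄 ∧ ∀ B' ∈ 𝔄, B' ⊆ B → B' = B) := by
        intro B; simp [hℬdef]
      -- choose embeddings for elements of 𝔄
      have hEmb : ∀ B : Finset V, ∃ ψB : Finset V → Finset V,
          X0 ⊂ B → B ⊆ X →
          ((∀ A A' : Finset V, B ⊆ A → A ⊆ X → B ⊆ A' → A' ⊆ X → (A ⊆ A' ↔ ψB A ⊆ ψB A')) ∧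
           (∀ A : Finset V, B ⊆ A → A ⊆ X → c (ψB A) = false) ∧
           (∀ A : Finset V, B ⊆ A → A ⊆ X → ψB A ∩ X = A) ∧
           B ∪ Y0 ⊆ ψB B) := by
        intro B
        by_cases h : X0 ⊂ B ∧ B ⊆ X
        · obtain ⟨f, hf1, hf2, hf3, hf4⟩ := hall B h.2 h.1
          exact ⟨f, fun _ _ => ⟨hf1, hf2, hf3, hf4⟩⟩
        · exact ⟨fun _ => ∅, fun h1 h2 => absurd ⟨h1, h2⟩ h⟩
      choose ψ hψ using hEmb
      -- the glued embedding
      set S : Finset V → Finset V :=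
        fun A => Y0 ∪ (ℬ.filter (fun B => B ⊆ A)).biUnion (fun B => ψ B A ∩ Y) with hSdef
      set φ : Finset V → Finset V := fun A => A ∪ S A with hφdef
      have hSY : ∀ A, S A ⊆ Y := by
        intro A
        refine Finset.union_subset hY0 (Finset.biUnion_subset.mpr fun B _ => ?_)
        exact Finset.inter_subset_right
      have hφint : ∀ A, A ⊆ X → φ A ∩ X = A := by
        intro A hAX
        have hSX : S A ∩ X = ∅ :=
          Finset.disjoint_iff_inter_eq_empty.mp (hd.symm.mono_left (hSY A))
        rw [hφdef]
        simp only []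
        rw [Finset.union_inter_distrib_right, Finset.inter_eq_left.mpr hAX, hSX,
          Finset.union_empty]
      have hY0S : ∀ A, Y0 ⊆ S A := fun A => Finset.subset_union_left
      have hφmono : ∀ A A', X0 ⊆ A → A ⊆ X → A ⊆ A' → A' ⊆ X → φ A ⊆ φ A' := by
        intro A A' _ hAX hAA' hA'X
        rw [hφdef]; simp only []
        apply Finset.union_subset
        · exact hAA'.trans Finset.subset_union_left
        · apply Finset.union_subset
          · exact (hY0S A').trans Finset.subset_union_right
          · apply Finset.biUnion_subset.mpr
            intro B hBF
            have hBmem : B ∈ ℬ := (Finset.mem_filter.mp hBF).1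
            have hBA : B ⊆ A := (Finset.mem_filter.mp hBF).2
            have hB𝔄 : B ∈ 𝔄 := ((memℬ B).mp hBmem).1
            obtain ⟨hBss, hBX, _⟩ := (mem𝔄 B).mp hB𝔄
            have hmono := ((hψ B hBss hBX).1 A A' hBA hAX (hBA.trans hAA') hA'X).mp hAA'
            have hBF' : B ∈ ℬ.filter (fun B => B ⊆ A') :=
              Finset.mem_filter.mpr ⟨hBmem, hBA.trans hAA'⟩
            calc ψ B A ∩ Y ⊆ ψ B A' ∩ Y := Finset.inter_subset_inter hmono Finset.Subset.rfl
              _ ⊆ (ℬ.filter (fun B => B ⊆ A')).biUnion (fun B => ψ B A' ∩ Y) :=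
                  Finset.subset_biUnion_of_mem (fun B => ψ B A' ∩ Y) hBF'
              _ ⊆ S A' := Finset.subset_union_right
              _ ⊆ A' ∪ S A' := Finset.subset_union_right
      -- incomparability helper
      have hsubX : ∀ B B' : Finset V, B ⊆ X → B ∪ Y0 ⊆ B' ∪ Y0 → B ⊆ B' := by
        intro B B' hBX h v hv
        rcases Finset.mem_union.mp (h (Finset.mem_union_left _ hv)) with h' | h'
        · exact h'
        · exact absurd (hY0 h') (Finset.disjoint_left.mp hd (hBX hv))
      -- redness
      have hφred : ∀ A, X0 ⊆ A → A ⊆ X → c (φ A) = false := by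
        intro A hX0A hAX
        by_cases hne : (ℬ.filter (fun B => B ⊆ A)).Nonempty
        · obtain ⟨B1, hB1⟩ := hne
          have hB1ℬ : B1 ∈ ℬ := (Finset.mem_filter.mp hB1).1
          have hB1A : B1 ⊆ A := (Finset.mem_filter.mp hB1).2
          have hB1𝔄 : B1 ∈ 𝔄 := ((memℬ B1).mp hB1ℬ).1
          have hB1min : ∀ B' ∈ 𝔄, B' ⊆ B1 → B' = B1 := ((memℬ B1).mp hB1ℬ).2
          obtain ⟨hB1ss, hB1X, hB1blue⟩ := (mem𝔄 B1).mp hB1𝔄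
          have hAψ : A ⊆ ψ B1 A := by
            have h : ψ B1 A ∩ X ⊆ ψ B1 A := Finset.inter_subset_left
            rwa [(hψ B1 hB1ss hB1X).2.2.1 A hB1A hAX] at h
          have hY0ψ : Y0 ⊆ ψ B1 A := by
            have hb : Y0 ⊆ ψ B1 B1 :=
              Finset.subset_union_right.trans (hψ B1 hB1ss hB1X).2.2.2
            have hm : ψ B1 B1 ⊆ ψ B1 A :=
              ((hψ B1 hB1ss hB1X).1 B1 A Finset.Subset.rfl hB1X hB1A hAX).mp hB1A
            exact hb.trans hm
          by_cases huniq : ∀ B' ∈ ℬ.filter (fun B => B ⊆ A), B' = B1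
          · -- φ A = ψ B1 A
            have hφeq : φ A = ψ B1 A := by
              apply Finset.Subset.antisymm
              · rw [hφdef]; simp only []
                refine Finset.union_subset hAψ (Finset.union_subset hY0ψ ?_)
                refine Finset.biUnion_subset.mpr fun B hBF => ?_
                rw [huniq B hBF]
                exact Finset.inter_subset_left
              · intro v hv
                rcases hmemXY v with hvX | hvY
                · have : v ∈ ψ B1 A ∩ X := Finset.mem_inter.mpr ⟨hv, hvX⟩
                  rw [(hψ B1 hB1ss hB1X).2.2.1 A hB1A hAX] at this
                  exact Finset.mem_union_left _ this
                · refine Finset.mem_union_right _ (Finset.mem_union_right _ ?_)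
                  exact Finset.mem_biUnion.mpr ⟨B1, hB1, Finset.mem_inter.mpr ⟨hv, hvY⟩⟩
            rw [hφeq]
            exact (hψ B1 hB1ss hB1X).2.1 A hB1A hAX
          · -- two distinct minimal blue sets below A: use NoBlueLambda
            push_neg at huniq
            obtain ⟨B2, hB2, hB2ne⟩ := huniq
            have hB2ℬ : B2 ∈ ℬ := (Finset.mem_filter.mp hB2).1
            have hB2A : B2 ⊆ A := (Finset.mem_filter.mp hB2).2
            have hB2𝔄 : B2 ∈ 𝔄 := ((memℬ B2).mp hB2ℬ).1
            have hB2min : ∀ B' ∈ 𝔄, B' ⊆ B2 → B' = B2 := ((memℬ B2).mp hB2ℬ).2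
            obtain ⟨hB2ss, hB2X, hB2blue⟩ := (mem𝔄 B2).mp hB2𝔄
            have hn12 : ¬ (B1 ∪ Y0 ⊆ B2 ∪ Y0) := by
              intro h
              exact hB2ne ((hB2min B1 hB1𝔄 (hsubX B1 B2 hB1X h)).symm ▸ rfl)
            have hn21 : ¬ (B2 ∪ Y0 ⊆ B1 ∪ Y0) := by
              intro h
              exact hB2ne (hB1min B2 hB2𝔄 (hsubX B2 B1 hB2X h))
            have hsub1 : B1 ∪ Y0 ⊆ φ A :=
              Finset.union_subset (hB1A.trans Finset.subset_union_left)
                ((hY0S A).trans Finset.subset_union_right)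
            have hsub2 : B2 ∪ Y0 ⊆ φ A :=
              Finset.union_subset (hB2A.trans Finset.subset_union_left)
                ((hY0S A).trans Finset.subset_union_right)
            by_contra hblue
            have hblue' : c (φ A) = true := by
              revert hblue; cases c (φ A) <;> simp
            exact hΛ ⟨B1 ∪ Y0, B2 ∪ Y0, φ A, hB1blue, hB2blue, hblue',
              Finset.ssubset_iff_subset_ne.mpr ⟨hsub1, fun he => hn21 (he ▸ hsub2)⟩,
              Finset.ssubset_iff_subset_ne.mpr ⟨hsub2, fun he => hn12 (he ▸ hsub1)⟩,
              hn12, hn21⟩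
        · -- no minimal blue set below A: φ A = A ∪ Y0 and A ∪ Y0 is red
          have hFempty : ℬ.filter (fun B => B ⊆ A) = ∅ :=
            Finset.not_nonempty_iff_eq_empty.mp hne
          have hφeq : φ A = A ∪ Y0 := by
            rw [hφdef]; simp only []
            rw [hSdef]; simp only []
            rw [hFempty, Finset.biUnion_empty, Finset.union_empty]
          rw [hφeq]
          by_cases hAeq : A = X0
          · rw [hAeq]; exact hcb
          · have hss : X0 ⊂ A :=
              Finset.ssubset_iff_subset_ne.mpr ⟨hX0A, fun h => hAeq h.symm⟩
            by_contra hblue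
            have hblue' : c (A ∪ Y0) = true := by
              revert hblue; cases c (A ∪ Y0) <;> simp
            have hA𝔄 : A ∈ 𝔄 := (mem𝔄 A).mpr ⟨hss, hAX, hblue'⟩
            have hTne : (𝔄.filter (fun B => B ⊆ A)).Nonempty :=
              ⟨A, Finset.mem_filter.mpr ⟨hA𝔄, Finset.Subset.rfl⟩⟩
            obtain ⟨m, hmM⟩ := Finset.exists_minimal hTne
            have hmT := hmM.prop
            have hmin : ∀ x ∈ 𝔄.filter (fun B => B ⊆ A), ¬ x < m := fun x hx => hmM.not_lt hx
            obtain ⟨hm𝔄, hmA⟩ := Finset.mem_filter.mp hmT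
            have hmℬ : m ∈ ℬ := by
              refine (memℬ m).mpr ⟨hm𝔄, fun B' hB' hsub => ?_⟩
              by_contra hne'
              have hB'T : B' ∈ 𝔄.filter (fun B => B ⊆ A) :=
                Finset.mem_filter.mpr ⟨hB', hsub.trans hmA⟩
              exact hmin B' hB'T
                (Finset.lt_iff_ssubset.mpr (Finset.ssubset_iff_subset_ne.mpr ⟨hsub, hne'⟩))
            have : m ∈ ℬ.filter (fun B => B ⊆ A) := Finset.mem_filter.mpr ⟨hmℬ, hmA⟩
            rw [hFempty] at this
            exact absurd this (Finset.notMem_empty m)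
      refine ⟨φ, fun A B hA hAX hB hBX => ⟨fun h => hφmono A B hA hAX h hBX, fun h => ?_⟩,
        hφred, fun A _ hAX => hφint A hAX, ?_⟩
      · have h' := Finset.inter_subset_inter h (Finset.Subset.rfl : X ⊆ X)
        rwa [hφint A hAX, hφint B hBX] at h'
      · rw [hφdef]; simp only []
        exact Finset.union_subset Finset.subset_union_left
          ((hY0S X0).trans Finset.subset_union_right)
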